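/- Let {M_k}_{k=1}^N be Pauli measurements on a graph state |G⟩ with M_k = χ_k S_k (S_k stabilizer elements, χ_k ∈ {±1}), satisfying the even-occurrence condition at every vertex and ∏_k χ_k = −1. Define the Bell operator B = ∑_{k=1}^N χ_k M_k. Then ⟨G| B |G⟩ = N, while for every deterministic local hidden variable assignment h : V × {X,Y,Z} → {±1}, the value ∑_{k=1}^N χ_k ∏_{v:(M_k)_v≠I} h(v,(M_k)_v) is at most N − 2. -/

import Mathlib

open scoped Classical

inductive Pauli | I | X | Y | Z
deriving DecidableEq

noncomputable def pauliMat : Pauli → Matrix (Fin 2) (Fin 2) ℂ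
  | Pauli.I => 1
  | Pauli.X => !![0, 1; 1, 0]
  | Pauli.Y => !![0, -Complex.I; Complex.I, 0]
  | Pauli.Z => !![1, 0; 0, -1]

noncomputable def pauliProd {V : Type} [Fintype V] [DecidableEq V] (σ : V → Pauli) :
    Matrix (V → Fin 2) (V → Fin 2) ℂ :=
  fun f g => ∏ v, pauliMat (σ v) (f v) (g v)

noncomputable def graphGen {V : Type} [Fintype V] [DecidableEq V] (G : SimpleGraph V) (v : V) :
    Matrix (V → Fin 2) (V → Fin 2) ℂ :=
  pauliProd (fun u => if u = v then Pauli.X else if G.Adj u v then Pauli.Z else Pauli.I)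

noncomputable def graphState {V : Type} [Fintype V] [DecidableEq V] (G : SimpleGraph V) :
    (V → Fin 2) → ℂ :=
  fun f => (-1 : ℂ) ^ (∑ e ∈ G.edgeFinset,
      Sym2.lift ⟨fun u v => (f u : ℕ) * (f v : ℕ), fun u v => Nat.mul_comm _ _⟩ e) /
    (Real.sqrt (2 ^ Fintype.card V) : ℂ)

noncomputable def expVal {V : Type} [Fintype V] [DecidableEq V]
    (ψ : (V → Fin 2) → ℂ) (P : Matrix (V → Fin 2) (V → Fin 2) ℂ) : ℂ :=
  ∑ f, ∑ g, (starRingEnd ℂ) (ψ f) * P f g * ψ g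

/- ### Auxiliary lemmas -/

lemma stmt17_pauliMat_I_apply (a b : Fin 2) :
    pauliMat Pauli.I a b = if a = b then 1 else 0 := by
  simp [pauliMat, Matrix.one_apply]

lemma stmt17_pauliMat_Z_apply (a b : Fin 2) :
    pauliMat Pauli.Z a b = if a = b then (-1 : ℂ) ^ (a : ℕ) else 0 := by
  fin_cases a <;> fin_cases b <;> simp [pauliMat]

lemma stmt17_pauliMat_X_apply (a b : Fin 2) :
    pauliMat Pauli.X a b = if b = a + 1 then 1 else 0 := by
  fin_cases a <;> fin_cases b <;> simp [pauliMat]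

section QuantumAux

variable {V : Type} [Fintype V] [DecidableEq V] (G : SimpleGraph V)

lemma stmt17_graphGen_apply_ne (v : V) (f g : V → Fin 2)
    (hg : g ≠ Function.update f v (f v + 1)) : graphGen G v f g = 0 := by
  obtain ⟨u, hu⟩ := Function.ne_iff.mp hg
  unfold graphGen pauliProd
  apply Finset.prod_eq_zero (Finset.mem_univ u)
  beta_reduce
  have key : ∀ a b : Fin 2, b ≠ a + 1 → b = a := by decide
  by_cases huv : u = v
  · subst huv
    rw [Function.update_self] at hu
    have hgu : g u = f u := key _ _ hu
    rw [if_pos rfl, stmt17_pauliMat_X_apply, hgu,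
      if_neg ((by decide : ∀ a : Fin 2, ¬ a = a + 1) (f u))]
  · rw [Function.update_of_ne huv] at hu
    rw [if_neg huv]
    by_cases hadj : G.Adj u v
    · rw [if_pos hadj, stmt17_pauliMat_Z_apply, if_neg (fun h => hu h.symm)]
    · rw [if_neg hadj, stmt17_pauliMat_I_apply, if_neg (fun h => hu h.symm)]

lemma stmt17_graphGen_apply_eq (v : V) (f : V → Fin 2) :
    graphGen G v f (Function.update f v (f v + 1)) =
      ∏ u ∈ G.neighborFinset v, (-1 : ℂ) ^ (f u : ℕ) := by
  unfold graphGen pauliProd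
  rw [← Finset.prod_filter_mul_prod_filter_not Finset.univ (· = v)]
  have h1 : (Finset.univ.filter (· = v)) = {v} := by ext u; simp [eq_comm]
  have hv : pauliMat (if v = v then Pauli.X else if G.Adj v v then Pauli.Z else Pauli.I)
      (f v) (Function.update f v (f v + 1) v) = 1 := by
    rw [if_pos rfl, Function.update_self, stmt17_pauliMat_X_apply, if_pos rfl]
  rw [h1, Finset.prod_singleton, hv, one_mul]
  have h2 : ∀ u ∈ Finset.univ.filter (¬ · = v),
      pauliMat (if u = v then Pauli.X else if G.Adj u v then Pauli.Z else Pauli.I)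
        (f u) (Function.update f v (f v + 1) u)
      = if G.Adj u v then (-1 : ℂ) ^ (f u : ℕ) else 1 := by
    intro u hu
    have huv : u ≠ v := by simpa using hu
    rw [if_neg huv, Function.update_of_ne huv]
    by_cases hadj : G.Adj u v
    · rw [if_pos hadj, if_pos hadj, stmt17_pauliMat_Z_apply, if_pos rfl]
    · rw [if_neg hadj, if_neg hadj, stmt17_pauliMat_I_apply, if_pos rfl]
  rw [Finset.prod_congr rfl h2, Finset.prod_ite, Finset.prod_const_one, mul_one]
  apply Finset.prod_congr _ (fun _ _ => rfl)
  ext u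
  simp only [Finset.mem_filter, Finset.mem_filter, Finset.mem_univ, true_and,
    SimpleGraph.mem_neighborFinset]
  constructor
  · rintro ⟨-, h⟩; exact h.symm
  · intro h; exact ⟨fun huv => G.irrefl (huv ▸ h), h.symm⟩

lemma stmt17_graphState_flip (v : V) (f : V → Fin 2) :
    graphState G (Function.update f v (f v + 1)) =
      (∏ u ∈ G.neighborFinset v, (-1 : ℂ) ^ (f u : ℕ)) * graphState G f := by
  set f' := Function.update f v (f v + 1) with hf'
  set T : (V → Fin 2) → Sym2 V → ℕ := fun h e =>
    Sym2.lift ⟨fun u w => (h u : ℕ) * (h w : ℕ), fun u w => Nat.mul_comm _ _⟩ e with hT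
  set c : ℂ := ∏ u ∈ G.neighborFinset v, (-1 : ℂ) ^ (f u : ℕ) with hc
  have key : (-1 : ℂ) ^ ((∑ e ∈ G.edgeFinset, T f' e) + (∑ e ∈ G.edgeFinset, T f e)) = c := by
    rw [← Finset.sum_add_distrib, ← Finset.prod_pow_eq_pow_sum]
    rw [← Finset.prod_filter_mul_prod_filter_not G.edgeFinset (v ∈ ·)]
    have hnon : ∀ e ∈ G.edgeFinset.filter (¬ v ∈ ·), (-1 : ℂ) ^ (T f' e + T f e) = 1 := by
      intro e he
      simp only [Finset.mem_filter] at he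
      obtain ⟨he1, he2⟩ := he
      induction e using Sym2.ind with
      | _ a b =>
        have ha : a ≠ v := fun h => he2 (h ▸ Sym2.mem_mk_left a b)
        have hb : b ≠ v := fun h => he2 (h ▸ Sym2.mem_mk_right a b)
        have : T f' s(a, b) = T f s(a, b) := by
          simp [hT, hf', Function.update_of_ne ha, Function.update_of_ne hb]
        rw [this, ← two_mul, pow_mul]
        norm_num
    rw [Finset.prod_congr rfl hnon, Finset.prod_const_one, mul_one]
    have himg : G.edgeFinset.filter (v ∈ ·) = (G.neighborFinset v).image (fun u => s(v, u)) := by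
      ext e
      simp only [Finset.mem_filter, Finset.mem_image, SimpleGraph.mem_neighborFinset,
        SimpleGraph.mem_edgeFinset]
      constructor
      · rintro ⟨he, hv⟩
        induction e using Sym2.ind with
        | _ a b =>
          rw [Sym2.mem_iff] at hv
          rw [SimpleGraph.mem_edgeSet] at he
          rcases hv with rfl | rfl
          · exact ⟨b, he, rfl⟩
          · exact ⟨a, he.symm, Sym2.eq_swap⟩
      · rintro ⟨u, hu, rfl⟩
        exact ⟨(SimpleGraph.mem_edgeSet G).mpr hu, Sym2.mem_mk_left v u⟩
    rw [himg, Finset.prod_image (fun u hu u' hu' h => by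
      simpa using (Sym2.congr_right.mp h))]
    apply Finset.prod_congr rfl
    intro u hu
    have huv : u ≠ v := fun h =>
      G.irrefl (h ▸ (SimpleGraph.mem_neighborFinset G v u).mp hu)
    have hfu : f' u = f u := Function.update_of_ne huv _ _
    have hTe : T f' s(v, u) + T f s(v, u)
        = ((f v + 1 : Fin 2) : ℕ) * (f u : ℕ) + (f v : ℕ) * (f u : ℕ) := by
      simp [hT, hf', Function.update_of_ne huv, Function.update_self]
    rw [hTe]
    congr 1
    have h2 : ((f v + 1 : Fin 2) : ℕ) = (((f v : ℕ) + 1) % 2) := by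
      simp [Fin.add_def]
    rw [h2]
    have hlt : (f v : ℕ) < 2 := (f v).isLt
    rcases (by omega : (f v : ℕ) = 0 ∨ (f v : ℕ) = 1) with h | h <;> rw [h] <;> simp
  unfold graphState
  show ((-1:ℂ) ^ (∑ e ∈ G.edgeFinset, T f' e)) / (Real.sqrt (2 ^ Fintype.card V) : ℂ)
      = c * (((-1:ℂ) ^ (∑ e ∈ G.edgeFinset, T f e)) / (Real.sqrt (2 ^ Fintype.card V) : ℂ))
  rw [← mul_div_assoc]
  congr 1
  have e1 : ((-1 : ℂ) ^ (∑ e ∈ G.edgeFinset, T f e)) *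
      ((-1 : ℂ) ^ (∑ e ∈ G.edgeFinset, T f e)) = 1 := by
    rw [← pow_add, ← two_mul, pow_mul]; norm_num
  calc (-1 : ℂ) ^ (∑ e ∈ G.edgeFinset, T f' e)
      = (-1 : ℂ) ^ ((∑ e ∈ G.edgeFinset, T f' e) + (∑ e ∈ G.edgeFinset, T f e)) *
        (-1 : ℂ) ^ (∑ e ∈ G.edgeFinset, T f e) := by
        rw [pow_add, mul_assoc, e1, mul_one]
    _ = c * (-1 : ℂ) ^ (∑ e ∈ G.edgeFinset, T f e) := by rw [key]

lemma stmt17_gen_fix (v : V) (f : V → Fin 2) :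
    (∑ g, graphGen G v f g * graphState G g) = graphState G f := by
  set f' := Function.update f v (f v + 1) with hf'
  rw [Finset.sum_eq_single_of_mem f' (Finset.mem_univ f')
    (fun g _ hg => by rw [stmt17_graphGen_apply_ne G v f g hg, zero_mul])]
  rw [stmt17_graphGen_apply_eq, stmt17_graphState_flip, ← mul_assoc,
    ← Finset.prod_mul_distrib]
  have : ∀ u ∈ G.neighborFinset v,
      (-1 : ℂ) ^ (f u : ℕ) * (-1 : ℂ) ^ (f u : ℕ) = 1 := by
    intro u _
    rw [← pow_add, ← two_mul, pow_mul]
    norm_num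
  rw [Finset.prod_congr rfl this, Finset.prod_const_one, one_mul]

lemma stmt17_closure_fix {A : Matrix (V → Fin 2) (V → Fin 2) ℂ}
    (hA : A ∈ Submonoid.closure (Set.range (graphGen G))) (f : V → Fin 2) :
    (∑ g, A f g * graphState G g) = graphState G f := by
  induction hA using Submonoid.closure_induction generalizing f with
  | mem A hA =>
    obtain ⟨v, rfl⟩ := hA
    exact stmt17_gen_fix G v f
  | one =>
    simp [Matrix.one_apply]
  | mul A B _ _ hA hB =>
    simp_rw [Matrix.mul_apply, Finset.sum_mul, mul_assoc]
    rw [Finset.sum_comm]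
    calc (∑ h, ∑ g, A f h * (B h g * graphState G g))
        = ∑ h, A f h * ∑ g, B h g * graphState G g := by
          simp_rw [Finset.mul_sum]
      _ = ∑ h, A f h * graphState G h := by simp_rw [hB]
      _ = graphState G f := hA f

lemma stmt17_graphState_norm :
    (∑ f, (starRingEnd ℂ) (graphState G f) * graphState G f) = 1 := by
  have hpos : (0:ℝ) ≤ 2 ^ Fintype.card V := by positivity
  have hterm : ∀ f : V → Fin 2,
      (starRingEnd ℂ) (graphState G f) * graphState G f = 1 / (2 ^ Fintype.card V : ℂ) := by
    intro f
    unfold graphState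
    rw [map_div₀, map_pow, map_neg, map_one, Complex.conj_ofReal]
    rw [div_mul_div_comm, ← pow_add, ← two_mul, pow_mul]
    norm_num
    rw [← mul_inv, ← Complex.ofReal_mul, Real.mul_self_sqrt hpos]
    push_cast
    ring_nf
  rw [Finset.sum_congr rfl (fun f _ => hterm f), Finset.sum_const]
  have hc : Fintype.card (V → Fin 2) = 2 ^ Fintype.card V := by
    simp [Fintype.card_fun]
  rw [Finset.card_univ, hc, nsmul_eq_mul]
  push_cast
  rw [mul_one_div, div_self (pow_ne_zero _ two_ne_zero)]

end QuantumAux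

lemma stmt17_lhv_prod {N : ℕ} {V : Type} [Fintype V] [DecidableEq V] (M : Fin N → V → Pauli)
    (v : V) (h : V → Pauli → ℤ)
    (hval : ∀ (v : V) (σ : Pauli), σ ≠ Pauli.I → h v σ = 1 ∨ h v σ = -1)
    (heven : ∀ (σ : Pauli), σ ≠ Pauli.I →
      Even (Finset.univ.filter (fun k => M k v = σ)).card) :
    (∏ k, if M k v = Pauli.I then 1 else h v (M k v)) = 1 := by
  classical
  set g : Pauli → ℤ := fun σ => if σ = Pauli.I then 1 else h v σ with hg
  have hmaps : ∀ k ∈ (Finset.univ : Finset (Fin N)),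
      M k v ∈ ({Pauli.I, Pauli.X, Pauli.Y, Pauli.Z} : Finset Pauli) := by
    intro k _; cases (M k v) <;> simp
  have := Finset.prod_fiberwise_of_maps_to hmaps (fun k => g (M k v))
  have key : (∏ k, g (M k v)) = 1 := by
    rw [← this]
    apply Finset.prod_eq_one
    intro σ _
    have : ∀ k ∈ Finset.univ.filter (fun k => M k v = σ), g (M k v) = g σ := by
      intro k hk; rw [(Finset.mem_filter.mp hk).2]
    rw [Finset.prod_congr rfl this, Finset.prod_const]
    by_cases hσ : σ = Pauli.I
    · simp [hg, hσ]
    · rcases hval v σ hσ with h1 | h1 <;>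
        simp only [hg, if_neg hσ, h1]
      · exact one_pow _
      · exact (heven σ hσ).neg_one_pow
  simpa [hg] using key

lemma stmt17_sum_bound {N : ℕ} (t : Fin N → ℤ) (ht : ∀ k, t k = 1 ∨ t k = -1)
    (hp : (∏ k, t k) = -1) : (∑ k, t k) ≤ (N : ℤ) - 2 := by
  have hex : ∃ k, t k = -1 := by
    by_contra hc
    push_neg at hc
    have : ∀ k, t k = 1 := fun k => (ht k).resolve_right (hc k)
    simp [this] at hp
  obtain ⟨k0, hk0⟩ := hex
  have hsplit := Finset.add_sum_erase Finset.univ t (Finset.mem_univ k0)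
  rw [← hsplit, hk0]
  have hb : (∑ k ∈ Finset.univ.erase k0, t k) ≤ ((Finset.univ.erase k0).card : ℤ) := by
    calc (∑ k ∈ Finset.univ.erase k0, t k) ≤ ∑ k ∈ Finset.univ.erase k0, 1 :=
      Finset.sum_le_sum (fun k _ => by rcases ht k with h | h <;> omega)
    _ = ((Finset.univ.erase k0).card : ℤ) := by simp
  have hcard : (Finset.univ.erase k0).card = N - 1 := by
    simp [Finset.card_erase_of_mem]
  have hN : 1 ≤ N := Fin.pos k0
  rw [hcard] at hb
  omega

/-- Bell inequality from a GHZ-type paradox: the Bell operator `B = ∑ χ k • M k`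
has graph-state expectation `N`, while every deterministic LHV assignment gives
value at most `N - 2`. -/
theorem stmt17 {V : Type} [Fintype V] [DecidableEq V] (G : SimpleGraph V) (N : ℕ)
    (M : Fin N → V → Pauli) (χ : Fin N → ℤ)
    (hχ : ∀ k, χ k = 1 ∨ χ k = -1)
    (hstab : ∀ k, ((χ k : ℂ) • pauliProd (M k)) ∈
      Submonoid.closure (Set.range (graphGen G)))
    (heven : ∀ (v : V) (σ : Pauli), σ ≠ Pauli.I →
      Even (Finset.univ.filter (fun k => M k v = σ)).card)
    (hprod : (∏ k, χ k) = -1) :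
    expVal (graphState G) (∑ k, (χ k : ℂ) • pauliProd (M k)) = (N : ℂ) ∧
    ∀ h : V → Pauli → ℤ,
      (∀ (v : V) (σ : Pauli), σ ≠ Pauli.I → h v σ = 1 ∨ h v σ = -1) →
      (∑ k, χ k * ∏ v, if M k v = Pauli.I then 1 else h v (M k v)) ≤ (N : ℤ) - 2 := by
  constructor
  · -- quantum part
    have step : ∀ k : Fin N, (∑ f, ∑ g, (starRingEnd ℂ) (graphState G f) *
        ((χ k : ℂ) • pauliProd (M k)) f g * graphState G g) = 1 := by
      intro k
      have h1 : ∀ f : V → Fin 2, (∑ g, (starRingEnd ℂ) (graphState G f) *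
          ((χ k : ℂ) • pauliProd (M k)) f g * graphState G g)
          = (starRingEnd ℂ) (graphState G f) * graphState G f := by
        intro f
        calc (∑ g, (starRingEnd ℂ) (graphState G f) *
              ((χ k : ℂ) • pauliProd (M k)) f g * graphState G g)
            = (starRingEnd ℂ) (graphState G f) *
              ∑ g, ((χ k : ℂ) • pauliProd (M k)) f g * graphState G g := by
              rw [Finset.mul_sum]
              exact Finset.sum_congr rfl (fun g _ => by ring)
          _ = (starRingEnd ℂ) (graphState G f) * graphState G f := by
              rw [stmt17_closure_fix G (hstab k) f]
      rw [Finset.sum_congr rfl (fun f _ => h1 f), stmt17_graphState_norm]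
    unfold expVal
    calc (∑ f, ∑ g, (starRingEnd ℂ) (graphState G f) *
          (∑ k, (χ k : ℂ) • pauliProd (M k)) f g * graphState G g)
        = ∑ f, ∑ g, ∑ k, (starRingEnd ℂ) (graphState G f) *
            ((χ k : ℂ) • pauliProd (M k)) f g * graphState G g := by
          apply Finset.sum_congr rfl; intro f _
          apply Finset.sum_congr rfl; intro g _
          rw [Matrix.sum_apply, Finset.mul_sum, Finset.sum_mul]
      _ = ∑ k, ∑ f, ∑ g, (starRingEnd ℂ) (graphState G f) *
            ((χ k : ℂ) • pauliProd (M k)) f g * graphState G g := by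
          rw [Finset.sum_congr rfl (fun f _ => Finset.sum_comm), Finset.sum_comm]
      _ = ∑ k : Fin N, (1 : ℂ) := Finset.sum_congr rfl (fun k _ => step k)
      _ = (N : ℂ) := by simp
  · -- LHV part
    intro h hval
    set t : Fin N → ℤ := fun k => χ k * ∏ v, if M k v = Pauli.I then 1 else h v (M k v)
      with ht
    have hfac : ∀ (k : Fin N) (v : V),
        (if M k v = Pauli.I then (1:ℤ) else h v (M k v)) = 1 ∨
        (if M k v = Pauli.I then (1:ℤ) else h v (M k v)) = -1 := by
      intro k v
      by_cases hI : M k v = Pauli.I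
      · left; rw [if_pos hI]
      · rw [if_neg hI]; exact hval v _ hI
    have htpm : ∀ k, t k = 1 ∨ t k = -1 := by
      intro k
      rw [← mul_self_eq_one_iff]
      have : t k * t k = (χ k * χ k) *
          ∏ v, ((if M k v = Pauli.I then (1:ℤ) else h v (M k v)) *
                (if M k v = Pauli.I then (1:ℤ) else h v (M k v))) := by
        rw [ht, Finset.prod_mul_distrib]; ring
      rw [this]
      have h1 : (χ k * χ k) = 1 := by rcases hχ k with h' | h' <;> rw [h'] <;> ring
      have h2 : ∀ v ∈ (Finset.univ : Finset V),
          ((if M k v = Pauli.I then (1:ℤ) else h v (M k v)) *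
           (if M k v = Pauli.I then (1:ℤ) else h v (M k v))) = 1 := by
        intro v _
        rcases hfac k v with h' | h' <;> rw [h'] <;> ring
      rw [h1, Finset.prod_congr rfl h2, Finset.prod_const_one, mul_one]
    have htprod : (∏ k, t k) = -1 := by
      rw [ht]
      rw [Finset.prod_mul_distrib, hprod]
      have : (∏ k, ∏ v, if M k v = Pauli.I then (1:ℤ) else h v (M k v)) = 1 := by
        rw [Finset.prod_comm]
        exact Finset.prod_eq_one (fun v _ =>
          stmt17_lhv_prod M v h hval (fun σ hσ => heven v σ hσ))
      rw [this, mul_one]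
    exact stmt17_sum_bound t htpm htprod
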